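/- On ℂ^{m+n} with m, n > 0, let f(z) = Re( (∏_{i=1}^m z_i)/(∏_{i=m+1}^{m+n} z_i) ). Then no non-constant solution curve of the gradient direction field ∇f (standard flat metric) approaches the origin. -/

import Mathlib

/-- The meromorphic function `s(z) = (∏_{i<m} z_i)/(∏_{m ≤ i} z_i)` on `ℂ^{m+n}`. -/
noncomputable def sFun (m n : ℕ) (z : Fin (m + n) → ℂ) : ℂ :=
  (∏ i : Fin (m + n), if (i : ℕ) < m then z i else 1) /
    (∏ i : Fin (m + n), if (i : ℕ) < m then 1 else z i)

/-- The gradient vector field `∇f` of `f = Re s` for the standard flat metric,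
`∇f = Re(s̄(∑_{i<m} (z_i/|z_i|²)∂_i − ∑_{m≤i} (z_i/|z_i|²)∂_i))`,
given by its complex components. -/
noncomputable def gradDir (m n : ℕ) (z : Fin (m + n) → ℂ) : Fin (m + n) → ℂ := fun i =>
  (if (i : ℕ) < m then 1 else -1) * (starRingEnd ℂ) (sFun m n z) * z i /
    (Complex.normSq (z i) : ℂ)

open Complex Filter

lemma sFun_eq_zero {m n : ℕ} {z : Fin (m + n) → ℂ} {i : Fin (m + n)} (h : z i = 0) :
    sFun m n z = 0 := by
  unfold sFun
  by_cases hi : (i : ℕ) < m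
  · rw [Finset.prod_eq_zero (Finset.mem_univ i) (by simp [hi, h])]
    simp
  · have : (∏ j : Fin (m + n), if (j : ℕ) < m then (1:ℂ) else z j) = 0 :=
      Finset.prod_eq_zero (Finset.mem_univ i) (by simp [hi, h])
    rw [this, div_zero]

/-- Derivative of `|φ(t)_i|²` along the flow: it equals `2 ε_i Re(s̄(φ t))`. -/
lemma key_deriv {m n : ℕ} (φ : ℝ → Fin (m + n) → ℂ)
    (hφ : ∀ t : ℝ, HasDerivAt φ (gradDir m n (φ t)) t) (i : Fin (m + n)) (t : ℝ) :
    HasDerivAt (fun s => Complex.normSq (φ s i))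
      (2 * (if (i : ℕ) < m then (1:ℝ) else -1) * ((starRingEnd ℂ) (sFun m n (φ t))).re) t := by
  have hc : HasDerivAt (fun s => φ s i) (gradDir m n (φ t) i) t :=
    hasDerivAt_pi.1 (hφ t) i
  have hre : HasDerivAt (fun s => (φ s i).re) ((gradDir m n (φ t) i).re) t :=
    Complex.reCLM.hasFDerivAt.comp_hasDerivAt t hc
  have him : HasDerivAt (fun s => (φ s i).im) ((gradDir m n (φ t) i).im) t :=
    Complex.imCLM.hasFDerivAt.comp_hasDerivAt t hc
  have h1 : HasDerivAt (fun s => (φ s i).re * (φ s i).re + (φ s i).im * (φ s i).im)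
      ((gradDir m n (φ t) i).re * (φ t i).re + (φ t i).re * (gradDir m n (φ t) i).re +
       ((gradDir m n (φ t) i).im * (φ t i).im + (φ t i).im * (gradDir m n (φ t) i).im)) t :=
    (hre.mul hre).add (him.mul him)
  have heq : (fun s => Complex.normSq (φ s i)) =
      fun s => (φ s i).re * (φ s i).re + (φ s i).im * (φ s i).im := by
    funext s; rw [Complex.normSq_apply]
  rw [heq]
  convert h1 using 1
  by_cases h0 : φ t i = 0
  · have hs : sFun m n (φ t) = 0 := sFun_eq_zero h0
    simp [gradDir, h0, hs]
  · have hN : (Complex.normSq (φ t i) : ℂ) ≠ 0 := by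
      simp [Complex.normSq_eq_zero, h0]
    have hval : (starRingEnd ℂ) (φ t i) * gradDir m n (φ t) i =
        (if (i : ℕ) < m then 1 else -1) * (starRingEnd ℂ) (sFun m n (φ t)) := by
      unfold gradDir
      rw [mul_div_assoc']
      rw [show (starRingEnd ℂ) (φ t i) * ((if (i : ℕ) < m then (1:ℂ) else -1) *
          (starRingEnd ℂ) (sFun m n (φ t)) * φ t i) =
          (if (i : ℕ) < m then (1:ℂ) else -1) * (starRingEnd ℂ) (sFun m n (φ t)) *
          ((starRingEnd ℂ) (φ t i) * φ t i) by ring]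
      rw [← Complex.normSq_eq_conj_mul_self, mul_div_assoc, div_self hN, mul_one]
    have hre2 : ((starRingEnd ℂ) (φ t i) * gradDir m n (φ t) i).re =
        (φ t i).re * (gradDir m n (φ t) i).re + (φ t i).im * (gradDir m n (φ t) i).im := by
      simp [Complex.mul_re]
    have := congrArg Complex.re hval
    rw [hre2] at this
    by_cases hi : (i : ℕ) < m <;> simp [hi] at this ⊢ <;> linarith

/-- The conserved quantity `|φ(t)_i|² + |φ(t)_j|²` (for `i < m ≤ j`) is constant along
the flow; tending to zero forces it to vanish identically. -/
lemma zero_comp {m n : ℕ} (hm : 0 < m) (hn : 0 < n)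
    (φ : ℝ → Fin (m + n) → ℂ)
    (hφ : ∀ t : ℝ, HasDerivAt φ (gradDir m n (φ t)) t)
    (happ : Filter.Tendsto φ Filter.atTop (nhds 0) ∨
      Filter.Tendsto φ Filter.atBot (nhds 0))
    (i j : Fin (m + n)) (hi : (i : ℕ) < m) (hj : ¬ (j : ℕ) < m) :
    ∀ t, Complex.normSq (φ t i) = 0 ∧ Complex.normSq (φ t j) = 0 := by
  set h : ℝ → ℝ := fun t => Complex.normSq (φ t i) + Complex.normSq (φ t j) with hh
  have hderiv : ∀ t, HasDerivAt h 0 t := by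
    intro t
    have := (key_deriv φ hφ i t).fun_add (key_deriv φ hφ j t)
    refine this.congr_deriv ?_
    simp [hi, hj]
  have hconst : ∀ t, h t = h 0 := by
    have hdiff : Differentiable ℝ h := fun t => (hderiv t).differentiableAt
    intro t
    exact is_const_of_deriv_eq_zero hdiff (fun x => (hderiv x).deriv) t 0
  have hzero : h 0 = 0 := by
    rcases happ with happ | happ
    · have h1 : Tendsto (fun t => h t) atTop (nhds (Complex.normSq ((0 : Fin (m+n) → ℂ) i) + Complex.normSq ((0 : Fin (m+n) → ℂ) j))) := by
        exact ((Complex.continuous_normSq.tendsto _).comp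
          (((continuous_apply i).tendsto _).comp happ)).add
          ((Complex.continuous_normSq.tendsto _).comp
          (((continuous_apply j).tendsto _).comp happ))
      simp only [Pi.zero_apply, Complex.normSq_zero, add_zero] at h1
      have h2 : Tendsto (fun t => h t) atTop (nhds (h 0)) := by
        have : (fun t => h t) = fun _ => h 0 := funext hconst
        rw [this]; exact tendsto_const_nhds
      exact tendsto_nhds_unique h2 h1
    · have h1 : Tendsto (fun t => h t) atBot (nhds (Complex.normSq ((0 : Fin (m+n) → ℂ) i) + Complex.normSq ((0 : Fin (m+n) → ℂ) j))) := by
        exact ((Complex.continuous_normSq.tendsto _).comp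
          (((continuous_apply i).tendsto _).comp happ)).add
          ((Complex.continuous_normSq.tendsto _).comp
          (((continuous_apply j).tendsto _).comp happ))
      simp only [Pi.zero_apply, Complex.normSq_zero, add_zero] at h1
      have h2 : Tendsto (fun t => h t) atBot (nhds (h 0)) := by
        have : (fun t => h t) = fun _ => h 0 := funext hconst
        rw [this]; exact tendsto_const_nhds
      exact tendsto_nhds_unique h2 h1
  intro t
  have ht : h t = 0 := (hconst t).trans hzero
  simp only [hh] at ht
  have h1 := Complex.normSq_nonneg (φ t i)
  have h2 := Complex.normSq_nonneg (φ t j)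
  constructor <;> linarith

/-- for `m, n > 0`, no non-constant solution curve of the gradient
direction field `∇f`, `f(z) = Re((∏_{i<m} z_i)/(∏_{m≤i} z_i))`, approaches the origin:
any solution curve tending to `0` is constant. -/
theorem stmt_6 (m n : ℕ) (hm : 0 < m) (hn : 0 < n)
    (φ : ℝ → Fin (m + n) → ℂ)
    (hφ : ∀ t : ℝ, HasDerivAt φ (gradDir m n (φ t)) t)
    (happ : Filter.Tendsto φ Filter.atTop (nhds 0) ∨
      Filter.Tendsto φ Filter.atBot (nhds 0)) :
    ∀ t t' : ℝ, φ t = φ t' := by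
  suffices hz : ∀ t, φ t = 0 by intro t t'; rw [hz t, hz t']
  intro t
  funext k
  have hmn : m < m + n := Nat.lt_add_of_pos_right hn
  have h0m : 0 < m + n := lt_of_lt_of_le hm (Nat.le_add_right m n)
  by_cases hk : (k : ℕ) < m
  · have := (zero_comp hm hn φ hφ happ k ⟨m, hmn⟩ hk (by simp)) t
    simpa [Complex.normSq_eq_zero] using this.1
  · have := (zero_comp hm hn φ hφ happ ⟨0, h0m⟩ k (by simpa) hk) t
    simpa [Complex.normSq_eq_zero] using this.2
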